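/- Let N ≥ 1, let z : Fin N → ℂ be injective, w : Fin N → ℂ, f : Fin N → ℂ, and define the extended barycentric function R : ℂ → ℂ by R(ζ) = n(ζ)/d(ζ) off the support points and R(z_j) = f_j. If w_i ≠ 0, then R has a complex derivative at z_i given by R'(z_i) = −(1/w_i) · Σ_{j ≠ i} ((f_i − f_j)/(z_i − z_j)) · w_j (the first-order Schneider–Warner formula). -/

import Mathlib

open Finset Filter Topology

/-- First-order Schneider–Warner formula: the derivative of the extended
barycentric function at a support point with nonzero weight. -/
theorem barycentric_schneider_warner
    (N : ℕ) (hN : 1 ≤ N) (z : Fin N → ℂ) (hz : Function.Injective z)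
    (w f : Fin N → ℂ) (R : ℂ → ℂ)
    (hRnode : ∀ j, R (z j) = f j)
    (hRoff : ∀ ζ : ℂ, (∀ j, ζ ≠ z j) →
      R ζ = (∑ j, w j * f j / (ζ - z j)) / (∑ j, w j / (ζ - z j)))
    (i : Fin N) (hw : w i ≠ 0) :
    HasDerivAt R
      (-(1 / w i) * ∑ j ∈ Finset.univ.erase i, ((f i - f j) / (z i - z j)) * w j)
      (z i) := by
  have hzi : ∀ j ∈ Finset.univ.erase i, z i - z j ≠ 0 := by
    intro j hj
    have hji : j ≠ i := (Finset.mem_erase.mp hj).1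
    exact sub_ne_zero.mpr fun h => hji (hz h).symm
  set g : ℂ → ℂ := fun ζ => ∑ j ∈ Finset.univ.erase i, w j * (f j - f i) / (ζ - z j)
    with hgdef
  set h : ℂ → ℂ := fun ζ => w i + (ζ - z i) * ∑ j ∈ Finset.univ.erase i, w j / (ζ - z j)
    with hhdef
  have hsum : ContinuousAt
      (fun ζ : ℂ => ∑ j ∈ Finset.univ.erase i, w j / (ζ - z j)) (z i) :=
    tendsto_finset_sum _ fun j hj =>
      ContinuousAt.div continuousAt_const (continuousAt_id.sub continuousAt_const) (hzi j hj)
  have hcont_g : ContinuousAt g (z i) :=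
    tendsto_finset_sum _ fun j hj =>
      ContinuousAt.div continuousAt_const (continuousAt_id.sub continuousAt_const) (hzi j hj)
  have hcont_h : ContinuousAt h (z i) :=
    continuousAt_const.add ((continuousAt_id.sub continuousAt_const).mul hsum)
  have hhzi : h (z i) = w i := by simp [hhdef]
  have hGlim : Tendsto (fun ζ => g ζ / h ζ) (𝓝[≠] (z i)) (𝓝 (g (z i) / w i)) := by
    have := (hcont_g.div hcont_h (by rw [hhzi]; exact hw)).tendsto
    simp only [Pi.div_apply, hhzi] at this
    exact this.mono_left nhdsWithin_le_nhds
  have hval : g (z i) / w i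
      = -(1 / w i) * ∑ j ∈ Finset.univ.erase i, ((f i - f j) / (z i - z j)) * w j := by
    have hg : g (z i) = -∑ j ∈ Finset.univ.erase i, ((f i - f j) / (z i - z j)) * w j := by
      rw [hgdef, ← Finset.sum_neg_distrib]
      exact Finset.sum_congr rfl fun j hj => by ring
    rw [hg]; ring
  rw [hasDerivAt_iff_tendsto_slope, ← hval]
  apply hGlim.congr'
  have hne : ∀ᶠ ζ in 𝓝 (z i), ∀ j ∈ Finset.univ.erase i, ζ ≠ z j := by
    rw [eventually_all_finset]
    intro j hj
    exact eventually_ne_nhds (fun hzz => hzi j hj (by rw [hzz]; ring))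
  have hhne : ∀ᶠ ζ in 𝓝 (z i), h ζ ≠ 0 := by
    have : {x : ℂ | x ≠ 0} ∈ 𝓝 (h (z i)) := by
      rw [hhzi]; exact isOpen_compl_singleton.mem_nhds hw
    exact hcont_h this
  filter_upwards [nhdsWithin_le_nhds hne, nhdsWithin_le_nhds hhne,
    self_mem_nhdsWithin] with ζ h1 h2 h3
  have hall : ∀ j, ζ ≠ z j := by
    intro j
    by_cases hji : j = i
    · rw [hji]; exact h3
    · exact h1 j (Finset.mem_erase.mpr ⟨hji, Finset.mem_univ j⟩)
  have hzz : ∀ j, ζ - z j ≠ 0 := fun j => sub_ne_zero.mpr (hall j)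
  set n : ℂ := ∑ j, w j * f j / (ζ - z j) with hndef
  set d : ℂ := ∑ j, w j / (ζ - z j) with hddef
  have hdmul : d * (ζ - z i) = h ζ := by
    rw [hddef, Finset.sum_mul, ← Finset.sum_erase_add _ _ (Finset.mem_univ i),
      div_mul_cancel₀ _ (hzz i), hhdef]
    simp only [Finset.mul_sum]
    rw [add_comm]
    congr 1
    exact Finset.sum_congr rfl fun j hj => by ring
  have hdne : d ≠ 0 := left_ne_zero_of_mul (hdmul ▸ h2)
  have hn : n - f i * d = g ζ := by
    rw [hndef, hddef, Finset.mul_sum, ← Finset.sum_sub_distrib, hgdef,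
      ← Finset.sum_erase_add _ (fun j => w j * f j / (ζ - z j) - f i * (w j / (ζ - z j)))
        (Finset.mem_univ i)]
    simp only [sub_self]
    rw [show w i * f i / (ζ - z i) - f i * (w i / (ζ - z i)) = 0 by ring, add_zero]
    exact Finset.sum_congr rfl fun j hj => by ring
  have hR : R ζ = n / d := hRoff ζ hall
  have : slope R (z i) ζ = g ζ / h ζ := by
    rw [slope_def_field, hRnode i, hR, ← hn, ← hdmul]
    rw [div_sub' hdne]
    rw [div_div]
    ring_nf
  exact this.symm
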